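/- In an exact-cover-induced AV/PAV game, the all-ones vector is in the TU-PAV-core iff the cover exists: given a 3-regular set system (universe X of size 3n̂, family 𝒮 of 3n̂ three-element sets, every element in exactly three sets), construct voters = elements, alternatives = sets, approvals A(v_i) = {c_j : x_i ∈ S_j}, and k = n̂. Then the constant vector α ≡ 1 lies in the TU-core under PAV if and only if (X, 𝒮) admits an exact cover by n̂ pairwise disjoint sets. -/

import Mathlib

/-- Harmonic partial sum `H x`. -/
noncomputable def harmonicSum (x : ℕ) : ℝ := ∑ z ∈ Finset.range x, (1 : ℝ) / (z + 1)

lemma harmonicSum_le (x : ℕ) : harmonicSum x ≤ x := by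
  unfold harmonicSum
  calc ∑ z ∈ Finset.range x, (1 : ℝ) / (z + 1)
      ≤ ∑ _z ∈ Finset.range x, (1 : ℝ) := by
        apply Finset.sum_le_sum
        intro z _
        rw [div_le_one (by positivity)]
        have : (0:ℝ) ≤ z := Nat.cast_nonneg z
        linarith
    _ = x := by simp

lemma harmonicSum_one : harmonicSum 1 = 1 := by simp [harmonicSum]

lemma le_one_of_harmonicSum_eq {x : ℕ} (h : harmonicSum x = x) : x ≤ 1 := by
  by_contra hx
  push_neg at hx
  have hlt : harmonicSum x < x := by
    unfold harmonicSum
    calc ∑ z ∈ Finset.range x, (1 : ℝ) / (z + 1)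
        < ∑ _z ∈ Finset.range x, (1 : ℝ) := by
          apply Finset.sum_lt_sum
          · intro z _
            rw [div_le_one (by positivity)]
            have : (0:ℝ) ≤ z := Nat.cast_nonneg z
            linarith
          · exact ⟨1, Finset.mem_range.mpr hx, by norm_num⟩
      _ = x := by simp
  linarith [h]

lemma dcount {n : ℕ} (S : Fin n → Finset (Fin n))
    (V' W : Finset (Fin n)) :
    ∑ v ∈ V', ((Finset.univ.filter (fun j => v ∈ S j)) ∩ W).card
      = ∑ j ∈ W, (S j ∩ V').card := by
  have h1 : ∀ v, (Finset.univ.filter (fun j => v ∈ S j)) ∩ W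
      = W.filter (fun j => v ∈ S j) := by
    intro v; ext j; simp [and_comm]
  have h2 : ∀ j, S j ∩ V' = V'.filter (fun v => v ∈ S j) := by
    intro j; ext v; simp [and_comm]
  simp only [h1, h2, Finset.card_filter]
  exact Finset.sum_comm

theorem stmt16 (n : ℕ) (hn : 0 < n)
    (S : Fin (3 * n) → Finset (Fin (3 * n)))
    (hsize : ∀ j, (S j).card = 3)
    (hreg : ∀ x : Fin (3 * n), (Finset.univ.filter (fun j => x ∈ S j)).card = 3) :
    ((∃ W : Finset (Fin (3 * n)), W.card = n ∧
        ∑ v : Fin (3 * n),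
          harmonicSum (((Finset.univ.filter (fun j => v ∈ S j)) ∩ W).card) = 3 * n) ∧
      (∀ W : Finset (Fin (3 * n)), W.card = n →
        ∑ v : Fin (3 * n),
          harmonicSum (((Finset.univ.filter (fun j => v ∈ S j)) ∩ W).card) ≤ 3 * n) ∧
      (∀ (V' : Finset (Fin (3 * n))) (W' : Finset (Fin (3 * n))),
        W'.card ≤ V'.card * n / (3 * n) →
        ∑ v ∈ V',
          harmonicSum (((Finset.univ.filter (fun j => v ∈ S j)) ∩ W').card) ≤ V'.card))
    ↔ ∃ 𝒮' : Finset (Fin (3 * n)), 𝒮'.card = n ∧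
        ∀ x : Fin (3 * n), ∃! j, j ∈ 𝒮' ∧ x ∈ S j := by
  constructor
  · rintro ⟨⟨W, hWcard, hWsum⟩, -, -⟩
    refine ⟨W, hWcard, ?_⟩
    -- total degree count
    set d : Fin (3 * n) → ℕ :=
      fun v => ((Finset.univ.filter (fun j => v ∈ S j)) ∩ W).card with hd
    have hdsum : ∑ v : Fin (3 * n), d v = 3 * n := by
      rw [hd]
      rw [dcount S Finset.univ W]
      have : ∀ j, (S j ∩ (Finset.univ : Finset (Fin (3 * n)))).card = 3 := by
        intro j; rw [Finset.inter_univ]; exact hsize j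
      rw [Finset.sum_congr rfl (fun j _ => this j), Finset.sum_const, hWcard]
      simp [mul_comm]
    -- compare real sums
    have hle : ∀ v ∈ (Finset.univ : Finset (Fin (3 * n))),
        harmonicSum (d v) ≤ (d v : ℝ) := fun v _ => harmonicSum_le (d v)
    have heq : ∑ v : Fin (3 * n), harmonicSum (d v) = ∑ v : Fin (3 * n), (d v : ℝ) := by
      rw [hWsum]
      rw [← Nat.cast_sum, hdsum]
      push_cast; ring
    have hpt : ∀ v ∈ (Finset.univ : Finset (Fin (3 * n))),
        harmonicSum (d v) = (d v : ℝ) :=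
      (Finset.sum_eq_sum_iff_of_le hle).mp heq
    have hdle : ∀ v : Fin (3 * n), d v ≤ 1 := fun v =>
      le_one_of_harmonicSum_eq (hpt v (Finset.mem_univ v))
    have hdone : ∀ v : Fin (3 * n), d v = 1 := by
      have hcard : (Finset.univ : Finset (Fin (3 * n))).card = 3 * n := by simp
      have hsum1 : ∑ v : Fin (3 * n), d v = ∑ _v : Fin (3 * n), 1 := by
        rw [hdsum, Finset.sum_const, hcard]; simp
      have := (Finset.sum_eq_sum_iff_of_le
        (fun v _ => hdle v)).mp hsum1
      intro v
      exact this v (Finset.mem_univ v)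
    intro x
    have h1 : ((Finset.univ.filter (fun j => x ∈ S j)) ∩ W).card = 1 := hdone x
    obtain ⟨a, ha⟩ := Finset.card_eq_one.mp h1
    have hamem : a ∈ (Finset.univ.filter (fun j => x ∈ S j)) ∩ W := by
      rw [ha]; exact Finset.mem_singleton_self a
    simp only [Finset.mem_inter, Finset.mem_filter, Finset.mem_univ, true_and] at hamem
    refine ⟨a, ⟨hamem.2, hamem.1⟩, ?_⟩
    rintro b ⟨hbW, hbS⟩
    have : b ∈ (Finset.univ.filter (fun j => x ∈ S j)) ∩ W := by
      simp only [Finset.mem_inter, Finset.mem_filter, Finset.mem_univ, true_and]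
      exact ⟨hbS, hbW⟩
    rw [ha, Finset.mem_singleton] at this
    exact this
  · rintro ⟨𝒮', h𝒮card, h𝒮cov⟩
    have key : ∀ (V' W : Finset (Fin (3 * n))),
        ∑ v ∈ V', harmonicSum (((Finset.univ.filter (fun j => v ∈ S j)) ∩ W).card)
          ≤ (∑ j ∈ W, (S j ∩ V').card : ℝ) := by
      intro V' W
      calc ∑ v ∈ V', harmonicSum (((Finset.univ.filter (fun j => v ∈ S j)) ∩ W).card)
          ≤ ∑ v ∈ V', (((Finset.univ.filter (fun j => v ∈ S j)) ∩ W).card : ℝ) :=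
            Finset.sum_le_sum (fun v _ => harmonicSum_le _)
        _ = (∑ j ∈ W, (S j ∩ V').card : ℝ) := by
            rw [← Nat.cast_sum, dcount S V' W, Nat.cast_sum]
    refine ⟨⟨𝒮', h𝒮card, ?_⟩, ?_, ?_⟩
    · -- exact cover gives each voter degree 1
      have hdeg : ∀ v : Fin (3 * n),
          ((Finset.univ.filter (fun j => v ∈ S j)) ∩ 𝒮').card = 1 := by
        intro v
        obtain ⟨a, ⟨haS, haM⟩, hau⟩ := h𝒮cov v
        apply Finset.card_eq_one.mpr
        refine ⟨a, ?_⟩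
        ext b
        simp only [Finset.mem_inter, Finset.mem_filter, Finset.mem_univ, true_and,
          Finset.mem_singleton]
        constructor
        · rintro ⟨hbS, hbM⟩; exact hau b ⟨hbM, hbS⟩
        · rintro rfl; exact ⟨haM, haS⟩
      simp only [hdeg, harmonicSum_one]
      simp
    · intro W hWcard
      calc ∑ v : Fin (3 * n),
            harmonicSum (((Finset.univ.filter (fun j => v ∈ S j)) ∩ W).card)
          ≤ (∑ j ∈ W, (S j ∩ Finset.univ).card : ℝ) := key Finset.univ W
        _ = 3 * n := by
            simp only [Finset.inter_univ, hsize, Finset.sum_const, hWcard, smul_eq_mul]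
            push_cast; ring
    · intro V' W' hW'
      have hW3 : 3 * W'.card ≤ V'.card := by
        have h1 : V'.card * n / (3 * n) = V'.card / 3 :=
          Nat.mul_div_mul_right V'.card 3 hn
        have h2 : W'.card ≤ V'.card / 3 := h1 ▸ hW'
        calc 3 * W'.card ≤ 3 * (V'.card / 3) := Nat.mul_le_mul_left 3 h2
          _ ≤ V'.card := Nat.mul_div_le V'.card 3
      calc ∑ v ∈ V',
            harmonicSum (((Finset.univ.filter (fun j => v ∈ S j)) ∩ W').card)
          ≤ (∑ j ∈ W', (S j ∩ V').card : ℝ) := key V' W'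
        _ ≤ (∑ _j ∈ W', (3 : ℕ) : ℝ) := by
            push_cast
            apply Finset.sum_le_sum
            intro j _
            exact_mod_cast (Finset.card_le_card (Finset.inter_subset_left)).trans_eq (hsize j)
        _ = (3 * W'.card : ℕ) := by push_cast; rw [Finset.sum_const]; push_cast; ring
        _ ≤ V'.card := by exact_mod_cast hW3
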